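/- Let (V, l_∗, r_∗, l_∘, r_∘) be a representation of an anti-pre-Poisson algebra (A, ∗, ∘). Then (V, -l_∗, -l_∘) is a representation of the sub-adjacent Poisson algebra (A, ⋆, [,]), where x⋆y = x∗y+y∗x and [x,y] = x∘y-y∘x. -/
import Mathlib


/-- A representation `(V, l, r)` of an anti-Zinbiel algebra `(A, ∗)` (multiplication in
`Module.End` is composition; `l⋆ = l + r`). -/
def IsAZRep {k A V : Type*} [Field k] [AddCommGroup A] [Module k A]
    [AddCommGroup V] [Module k V]
    (s : A →ₗ[k] A →ₗ[k] A) (l r : A → Module.End k V) : Prop :=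
  IsLinearMap k l ∧ IsLinearMap k r ∧
  (∀ x y, l x * l y = - l (s x y + s y x)) ∧
  (∀ x y, l x * l y = - (r x * (l y + r y))) ∧
  (∀ x y, l x * l y = r (s y x)) ∧
  (∀ x y, l x * r y = - (r y * (l x + r x))) ∧
  (∀ x y, l x * r y = - (r x * (l y + r y))) ∧
  (∀ x y, l x * r y = l y * r x) ∧
  (∀ x y, r (s x y) = l x * r y) ∧
  (∀ x y, l y * l x = l x * l y)

/-- A representation `(V, l, r)` of an anti-pre-Lie algebra `(A, ∘)`. -/
def IsAPLRep {k A V : Type*} [Field k] [AddCommGroup A] [Module k A]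
    [AddCommGroup V] [Module k V]
    (c : A →ₗ[k] A →ₗ[k] A) (l r : A → Module.End k V) : Prop :=
  IsLinearMap k l ∧ IsLinearMap k r ∧
  (∀ x y, l (c y x) - l (c x y) = l x * l y - l y * l x) ∧
  (∀ x y, r (c x y) = l x * r y + r y * l x - r y * r x) ∧
  (∀ x y, l (c y x) - l (c x y) = r x * l y - r y * l x - r x * r y + r y * r x)

/-- A representation `(V, ls, rs, lc, rc)` of an anti-pre-Poisson algebra `(A, ∗, ∘)`. -/
def IsAPPRep {k A V : Type*} [Field k] [AddCommGroup A] [Module k A]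
    [AddCommGroup V] [Module k V]
    (s c : A →ₗ[k] A →ₗ[k] A) (ls rs lc rc : A → Module.End k V) : Prop :=
  IsAZRep s ls rs ∧ IsAPLRep c lc rc ∧
  (∀ x y, ls (c x y - c y x) = ls y * lc x - lc x * ls y) ∧
  (∀ x y, lc (s x y + s y x) = - (ls x * lc y) - ls y * lc x) ∧
  (∀ x y, rs x * (lc y - rc y) = rc (s y x) - ls y * rc x) ∧
  (∀ x y, rc x * (ls y + rs y) = - rs (c y x) - ls y * rc x) ∧
  (∀ x y, rs x * (lc y - rc y) = rs (c y x) - lc y * rs x) ∧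
  (∀ x y, rc (s x y + s y x) + ls x * lc y + ls y * lc x = ls x * rc y + ls y * rc x) ∧
  (∀ x y, lc x * (ls y + rs y) + rs (c y x) + ls y * rc x = ls y * lc x + rs (c x y))

/-- A representation `(V, μ, ρ)` of the Poisson algebra with product `x⋆y = x∗y+y∗x`
and bracket `[x,y] = x∘y-y∘x` coming from an anti-pre-Poisson algebra `(A,s,c)`. -/
def IsPoissonRep {k A V : Type*} [Field k] [AddCommGroup A] [Module k A]
    [AddCommGroup V] [Module k V]
    (s c : A →ₗ[k] A →ₗ[k] A) (μ ρ : A → Module.End k V) : Prop :=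
  IsLinearMap k μ ∧ IsLinearMap k ρ ∧
  (∀ x y, μ (s x y + s y x) = μ x * μ y) ∧
  (∀ x y, ρ (c x y - c y x) = ρ x * ρ y - ρ y * ρ x) ∧
  (∀ x y, ρ (s x y + s y x) = μ y * ρ x + μ x * ρ y) ∧
  (∀ x y, μ (c x y - c y x) = ρ x * μ y - μ y * ρ x)

/-- if `(V, ls, rs, lc, rc)` is a representation of an anti-pre-Poisson
algebra, then `(V, -ls, -lc)` is a representation of the sub-adjacent Poisson algebra. -/
theorem appRep_to_poissonRep {k A V : Type*} [Field k] [AddCommGroup A] [Module k A]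
    [AddCommGroup V] [Module k V]
    (s c : A →ₗ[k] A →ₗ[k] A) (ls rs lc rc : A → Module.End k V)
    (h : IsAPPRep s c ls rs lc rc) :
    IsPoissonRep s c (fun x => -(ls x)) (fun x => -(lc x)) := by
  obtain ⟨⟨hlsl, _, haz1, _⟩, ⟨hlcl, _, hapl1, _⟩, happ1, happ2, _⟩ := h
  refine ⟨⟨fun x y => by simp only [hlsl.map_add]; abel,
      fun t x => by simp [hlsl.map_smul]⟩,
    ⟨fun x y => by simp only [hlcl.map_add]; abel,
      fun t x => by simp [hlcl.map_smul]⟩,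
    fun x y => ?_, fun x y => ?_, fun x y => ?_, fun x y => ?_⟩
  · show -ls (s x y + s y x) = -ls x * -ls y
    rw [neg_mul_neg]
    exact (haz1 x y).symm
  · show -lc (c x y - c y x) = -lc x * -lc y - -lc y * -lc x
    rw [neg_mul_neg, neg_mul_neg, hlcl.map_sub, neg_sub]
    exact hapl1 x y
  · show -lc (s x y + s y x) = -ls y * -lc x + -ls x * -lc y
    rw [neg_mul_neg, neg_mul_neg, happ2 x y]
    abel
  · show -ls (c x y - c y x) = -lc x * -ls y - -ls y * -lc x
    rw [neg_mul_neg, neg_mul_neg, happ1 x y]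
    abel
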